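/- Let G be a cofinitary group, r ∈ 2^ω, and (s,E) a condition of Z_G(r). Then: (1) if n ∉ dom(s), then for all but finitely many m ∈ ℕ the pair (s ∪ {(n,m)}, E) is a condition of Z_G(r) extending (s,E); (2) if m ∉ ran(s), then for all but finitely many n ∈ ℕ the pair (s ∪ {(n,m)}, E) is a condition of Z_G(r) extending (s,E). -/

import Mathlib

noncomputable section

/-- Permutations of the natural numbers (elements of `S_∞`). -/
abbrev Perm' := Equiv.Perm ℕ

/-- A letter of a word over `G ∪ {x, x⁻¹}`: either a group element (of `S_∞`),
or `Sum.inr true` standing for `x`, or `Sum.inr false` standing for `x⁻¹`. -/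
abbrev Letter := Perm' ⊕ Bool

/-- A word is a list of letters, written left to right
(the leftmost letter is applied last). -/
abbrev Word := List Letter

/-- A subgroup of `S_∞` is cofinitary if every non-identity element
has only finitely many fixed points. -/
def Cofinitary (G : Subgroup Perm') : Prop :=
  ∀ g ∈ G, g ≠ 1 → {n : ℕ | g n = n}.Finite

/-- A set of pairs is a partial injection (functional and injective). -/
def PartInj (s : Set (ℕ × ℕ)) : Prop :=
  (∀ ⦃a b c⦄, (a, b) ∈ s → (a, c) ∈ s → b = c) ∧
  (∀ ⦃a b c⦄, (a, c) ∈ s → (b, c) ∈ s → a = b)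

/-- Domain of a partial injection given as a set of pairs. -/
def pdom (s : Set (ℕ × ℕ)) : Set ℕ := Prod.fst '' s

/-- Range of a partial injection given as a set of pairs. -/
def pran (s : Set (ℕ × ℕ)) : Set ℕ := Prod.snd '' s

/-- The relation given by substituting the partial injection `s` for `x`
(and `s⁻¹` for `x⁻¹`) in a single letter. -/
def letterRel (s : Set (ℕ × ℕ)) : Letter → ℕ → ℕ → Prop
  | Sum.inl g => fun a b => g a = b
  | Sum.inr true => fun a b => (a, b) ∈ s
  | Sum.inr false => fun a b => (b, a) ∈ s

/-- The relation `w[s]`: evaluation of a word at the partial injection `s`,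
composing the letter relations (rightmost letter applied first). -/
def wordRel (s : Set (ℕ × ℕ)) : Word → ℕ → ℕ → Prop
  | [] => fun a b => a = b
  | l :: w => fun a b => ∃ c, wordRel s w a c ∧ letterRel s l c b

/-- `fix(w[s])`, the set of fixed points of the partial injection `w[s]`. -/
def wordFix (s : Set (ℕ × ℕ)) (w : Word) : Set ℕ := {n | wordRel s w n n}

/-- The word `x^k` for an integer `k` (for `k < 0`, `|k|` copies of `x⁻¹`). -/
def xpow (k : ℤ) : Word :=
  if 0 ≤ k then List.replicate k.toNat (Sum.inr true : Letter)
  else List.replicate (-k).toNat (Sum.inr false : Letter)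

/-- The block `g x^k` as a word. -/
def blockWord (p : Perm' × ℤ) : Word := Sum.inl p.1 :: xpow p.2

/-- `w` is a nice word (member of `W*_G`): `w = x^{k₀}` with `k₀ > 0`, or
`w = g_l x^{k_l} ⋯ g₁ x^{k₁} g₀ x^{k₀}` with `k₀ > 0`, all `k_i ≠ 0` and all
`g_i ∈ G \ {id}`. -/
def IsNice (G : Subgroup Perm') (w : Word) : Prop :=
  (∃ k : ℕ, 0 < k ∧ w = xpow (k : ℤ)) ∨
  (∃ bs : List (Perm' × ℤ), bs ≠ [] ∧
    (∀ p ∈ bs, p.1 ∈ G ∧ p.1 ≠ 1 ∧ p.2 ≠ 0) ∧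
    (∃ p, bs.getLast? = some p ∧ 0 < p.2) ∧
    w = (bs.map blockWord).flatten)

/-- The number of occurrences of `x` or `x⁻¹` in a word. -/
def xOccurrences (w : Word) : ℕ := w.countP (fun l => l.isRight)

/-- `w ∈ W¹_G`: a nice word with exactly one occurrence of `x` or `x⁻¹`. -/
def IsNiceOne (G : Subgroup Perm') (w : Word) : Prop :=
  IsNice G w ∧ xOccurrences w = 1

/-- `(s, E)` is a condition of Zhang's forcing `Z_G`: `s` is a finite partial
injection and `E` a finite set of nice words. -/
def ZCond (G : Subgroup Perm') (s : Set (ℕ × ℕ)) (E : Set Word) : Prop :=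
  s.Finite ∧ PartInj s ∧ E.Finite ∧ ∀ w ∈ E, IsNice G w

/-- `(t, F) ≤ (s, E)` in Zhang's forcing: `s ⊆ t`, `E ⊆ F`, and
`fix(w[t]) = fix(w[s])` for every `w ∈ E`. -/
def ZLe (t : Set (ℕ × ℕ)) (F : Set Word) (s : Set (ℕ × ℕ)) (E : Set Word) : Prop :=
  s ⊆ t ∧ E ⊆ F ∧ ∀ w ∈ E, wordFix t w = wordFix s w

/-- An injective tree: a nonempty set of finite sequences closed under initial
segments, all of whose elements are injective sequences. -/
def IsInjTree (T : Set (List ℕ)) : Prop :=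
  T.Nonempty ∧ (∀ t ∈ T, ∀ s : List ℕ, s <+: t → s ∈ T) ∧ ∀ t ∈ T, t.Nodup

/-- `T ∈ I_i(P)⁺`: an injective tree such that for every `s ∈ T` and every
finite `P₀ ⊆ P` there are `t ∈ T` extending `s` and `k ∈ dom(t) \ dom(s)` with
`t(k) ≠ f(k)` for all `f ∈ P₀`. -/
def TreePos (P : Set Perm') (T : Set (List ℕ)) : Prop :=
  IsInjTree T ∧
  ∀ s ∈ T, ∀ P₀ ⊆ P, P₀.Finite →
    ∃ t ∈ T, s <+: t ∧ ∃ k, s.length ≤ k ∧ k < t.length ∧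
      ∀ f ∈ P₀, t.getD k 0 ≠ f k

/-- A set `O` is closed under a relation `R` and its inverse. -/
def RelClosed (R : ℕ → ℕ → Prop) (O : Set ℕ) : Prop :=
  ∀ a b, R a b → (a ∈ O ↔ b ∈ O)

/-- The orbit of `n` under the (partial injective) relation `R`: the smallest
set containing `n` closed under applications of `R` and `R⁻¹`. -/
def relOrbit (R : ℕ → ℕ → Prop) (n : ℕ) : Set ℕ :=
  ⋂₀ {O : Set ℕ | n ∈ O ∧ RelClosed R O}

/-- The set of all orbits of the relation `R`. -/
def relOrbits (R : ℕ → ℕ → Prop) : Set (Set ℕ) := {O | ∃ n, O = relOrbit R n}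

/-- Domain of a relation. -/
def relDom (R : ℕ → ℕ → Prop) : Set ℕ := {a | ∃ b, R a b}

/-- Range of a relation. -/
def relRan (R : ℕ → ℕ → Prop) : Set ℕ := {b | ∃ a, R a b}

/-- The set of closed orbits of `R`: those orbits contained in `dom ∩ ran`. -/
def relClosedOrbits (R : ℕ → ℕ → Prop) : Set (Set ℕ) :=
  {O ∈ relOrbits R | O ⊆ relDom R ∩ relRan R}

/-- The relation of a partial injection given as a set of pairs. -/
def sRel (s : Set (ℕ × ℕ)) : ℕ → ℕ → Prop := fun a b => (a, b) ∈ s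

/-- The relation (graph) of a permutation of `ℕ`. -/
def permRel (f : Perm') : ℕ → ℕ → Prop := fun a b => f a = b

/-- A partial injection `s` is nice: every closed orbit has its minimum below
the minimum of the complement of the union of all closed orbits. -/
def NiceInj (s : Set (ℕ × ℕ)) : Prop :=
  ∀ O ∈ relClosedOrbits (sRel s),
    sInf O < sInf {n : ℕ | n ∉ ⋃₀ relClosedOrbits (sRel s)}

/-- The position of a closed orbit `O` of `s` in the well-order of closed
orbits by their minima. -/
def orbitIndex (s : Set (ℕ × ℕ)) (O : Set ℕ) : ℕ :=
  {P ∈ relClosedOrbits (sRel s) | sInf P < sInf O}.ncard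

/-- `s` codes `r`, i.e. `o_s ⊆ r`: the `n`-th closed orbit (in the well-order
by minima) has cardinality congruent to `r(n)` mod 2. -/
def CodesReal (s : Set (ℕ × ℕ)) (r : ℕ → Fin 2) : Prop :=
  ∀ O ∈ relClosedOrbits (sRel s), O.ncard % 2 = (r (orbitIndex s O) : ℕ)

/-- `(s, E)` is a condition of `Z_G(r)`. -/
def ZrCond (G : Subgroup Perm') (r : ℕ → Fin 2)
    (s : Set (ℕ × ℕ)) (E : Set Word) : Prop :=
  ZCond G s E ∧ NiceInj s ∧ CodesReal s r

/-- The `n`-th prime. -/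
def pPrime (n : ℕ) : ℕ := Nat.nth Nat.Prime n

/-- The orbit-coding function `o†`: `o†(n)` is the number of closed orbits of
`R` of cardinality `p_n`, modulo 2. -/
def odag (R : ℕ → ℕ → Prop) (n : ℕ) : ℕ :=
  {O ∈ relClosedOrbits R | O.ncard = pPrime n}.ncard % 2

/-- `v^k`: the word `v` concatenated `k` times. -/
def wpow (v : Word) (k : ℕ) : Word := (List.replicate k v).flatten

/-- `w ∈ W†_G`: a nice word that is indecomposable, i.e. not of the form `v^k`
for a nice word `v` and `k > 1`. -/
def Indecomposable (G : Subgroup Perm') (w : Word) : Prop :=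
  IsNice G w ∧ ¬∃ v : Word, IsNice G v ∧ ∃ k : ℕ, 1 < k ∧ w = wpow v k

/-- The inverse of a letter. -/
def letterInv : Letter → Letter
  | Sum.inl g => Sum.inl g⁻¹
  | Sum.inr b => Sum.inr (!b)

/-- The inverse of a word. -/
def wordInv (w : Word) : Word := (w.map letterInv).reverse

/-- `E` is closed under cyclic permutations and inverses thereof within `W*_G`. -/
def CyclClosed (G : Subgroup Perm') (E : Set Word) : Prop :=
  ∀ w ∈ E, ∀ w₀ w₁ : Word, w = w₀ ++ w₁ →
    (IsNice G (w₁ ++ w₀) → w₁ ++ w₀ ∈ E) ∧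
    (IsNice G (wordInv (w₁ ++ w₀)) → wordInv (w₁ ++ w₀) ∈ E)

/-- `(s, E)` is a condition of `Z†_G(r)`: a Zhang condition such that `E` is
closed under cyclic permutations and inverses thereof in `W*_G`, and whenever
`w = v^k ∈ E` with `v ∈ W†_G` then `v^l ∈ E` for all `0 < l ≤ k` and `o†_{v[s]}`
codes `r` up to `n` for every `n` with `p_n ≤ k`. -/
def ZdagCond (G : Subgroup Perm') (r : ℕ → Fin 2)
    (s : Set (ℕ × ℕ)) (E : Set Word) : Prop :=
  ZCond G s E ∧ CyclClosed G E ∧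
  ∀ w ∈ E, ∀ v : Word, ∀ k : ℕ, Indecomposable G v → w = wpow v k →
    (∀ l : ℕ, 0 < l → l ≤ k → wpow v l ∈ E) ∧
    (∀ n : ℕ, pPrime n ≤ k → ∀ i ≤ n, odag (wordRel s v) i = (r i : ℕ))

/-- Substituting the permutation `f` for `x` in a letter. -/
def letterPerm (f : Perm') : Letter → Perm'
  | Sum.inl g => g
  | Sum.inr true => f
  | Sum.inr false => f⁻¹

/-- `w[f]`: evaluation of a word at the permutation `f`. -/
def wordPerm (f : Perm') (w : Word) : Perm' := (w.map (letterPerm f)).prod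

/-- Two functions are eventually different. -/
def EvDiff (f g : ℕ → ℕ) : Prop := {k : ℕ | f k = g k}.Finite

/-- A set of permutations is an eventually different family. -/
def EDFamily (P : Set Perm') : Prop :=
  ∀ f ∈ P, ∀ g ∈ P, f ≠ g → EvDiff f g


section Dev
open List

lemma mem_pdom {s : Set (ℕ × ℕ)} {a : ℕ} : a ∈ pdom s ↔ ∃ b, (a, b) ∈ s := by
  constructor
  · rintro ⟨⟨x, y⟩, hxy, rfl⟩; exact ⟨y, hxy⟩
  · rintro ⟨b, hb⟩; exact ⟨(a, b), hb, rfl⟩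

lemma mem_pran {s : Set (ℕ × ℕ)} {b : ℕ} : b ∈ pran s ↔ ∃ a, (a, b) ∈ s := by
  constructor
  · rintro ⟨⟨x, y⟩, hxy, rfl⟩; exact ⟨x, hxy⟩
  · rintro ⟨a, ha⟩; exact ⟨(a, b), ha, rfl⟩

@[simp] lemma letterRel_inl {s : Set (ℕ×ℕ)} {g : Perm'} {a b : ℕ} :
    letterRel s (Sum.inl g) a b ↔ g a = b := Iff.rfl
@[simp] lemma letterRel_x {s : Set (ℕ×ℕ)} {a b : ℕ} :
    letterRel s (Sum.inr true) a b ↔ (a, b) ∈ s := Iff.rfl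
@[simp] lemma letterRel_xinv {s : Set (ℕ×ℕ)} {a b : ℕ} :
    letterRel s (Sum.inr false) a b ↔ (b, a) ∈ s := Iff.rfl
@[simp] lemma wordRel_nil {s : Set (ℕ×ℕ)} {a b : ℕ} : wordRel s [] a b ↔ a = b := Iff.rfl
@[simp] lemma wordRel_cons {s : Set (ℕ×ℕ)} {l : Letter} {w : Word} {a b : ℕ} :
    wordRel s (l :: w) a b ↔ ∃ c, wordRel s w a c ∧ letterRel s l c b := Iff.rfl

lemma letterRel_mono {s t : Set (ℕ×ℕ)} (h : s ⊆ t) (l : Letter) {a b : ℕ} :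
    letterRel s l a b → letterRel t l a b := by
  cases l with
  | inl g => exact id
  | inr v => cases v <;> exact fun hx => h hx

lemma wordRel_mono {s t : Set (ℕ×ℕ)} (h : s ⊆ t) :
    ∀ (w : Word) {a b : ℕ}, wordRel s w a b → wordRel t w a b
  | [], _, _, hw => hw
  | l :: w, _, _, ⟨c, hc, hl⟩ => ⟨c, wordRel_mono h w hc, letterRel_mono h l hl⟩

def flipL : Letter → Letter
  | Sum.inl g => Sum.inl g
  | Sum.inr b => Sum.inr (!b)

def flipW (w : Word) : Word := w.map flipL

def swapS (s : Set (ℕ × ℕ)) : Set (ℕ × ℕ) := {p | (p.2, p.1) ∈ s}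

lemma swapS_insert (ν μ : ℕ) (s : Set (ℕ × ℕ)) :
    swapS (insert (ν, μ) s) = insert (μ, ν) (swapS s) := by
  ext ⟨a, b⟩
  simp only [swapS, Set.mem_insert_iff, Set.mem_setOf_eq, Prod.mk.injEq]
  tauto

lemma pdom_swapS (s : Set (ℕ × ℕ)) : pdom (swapS s) = pran s := by
  ext a; simp [mem_pdom, mem_pran, swapS]

lemma pran_swapS (s : Set (ℕ × ℕ)) : pran (swapS s) = pdom s := by
  ext a; simp [mem_pdom, mem_pran, swapS]

lemma letterRel_swap_flip (s : Set (ℕ × ℕ)) (l : Letter) (a b : ℕ) :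
    letterRel (swapS s) (flipL l) a b ↔ letterRel s l a b := by
  cases l with
  | inl g => exact Iff.rfl
  | inr v => cases v <;> simp [flipL, swapS]

lemma wordRel_swap_flip (s : Set (ℕ × ℕ)) :
    ∀ (w : Word) (a b : ℕ), wordRel (swapS s) (flipW w) a b ↔ wordRel s w a b := by
  intro w
  induction w with
  | nil => intro a b; exact Iff.rfl
  | cons l w ih =>
    intro a b
    show (∃ c, wordRel (swapS s) (flipW w) a c ∧ letterRel (swapS s) (flipL l) c b) ↔ _
    simp only [ih, letterRel_swap_flip]
    exact Iff.rfl

lemma wordFix_swap_flip (s : Set (ℕ × ℕ)) (w : Word) :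
    wordFix (swapS s) (flipW w) = wordFix s w :=
  Set.ext fun n => wordRel_swap_flip s w n n

end Dev
section Dev2
open List

/-- Allowed adjacency in a reduced word: no two group letters next to each
other, and no `x x⁻¹` / `x⁻¹ x` cancellation. -/
def OkAdj : Letter → Letter → Prop
  | Sum.inl _, Sum.inl _ => False
  | Sum.inr b, Sum.inr c => b = c
  | _, _ => True

@[simp] lemma okAdj_inl_inl {g g' : Perm'} : OkAdj (Sum.inl g) (Sum.inl g') ↔ False := Iff.rfl
@[simp] lemma okAdj_inr_inr {b c : Bool} : OkAdj (Sum.inr b) (Sum.inr c) ↔ b = c := Iff.rfl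
@[simp] lemma okAdj_inl_inr {g : Perm'} {b : Bool} : OkAdj (Sum.inl g) (Sum.inr b) := trivial
@[simp] lemma okAdj_inr_inl {g : Perm'} {b : Bool} : OkAdj (Sum.inr b) (Sum.inl g) := trivial

structure SafeH (s : Set (ℕ × ℕ)) (ν μ : ℕ) (Gs : Set Perm') : Prop where
  hν : ν ∉ pdom s
  hμd : μ ∉ pdom s
  hμr : μ ∉ pran s
  hμν : μ ≠ ν
  hg : ∀ g ∈ Gs, (g : Perm') μ ∉ pdom s ∧ (g : Perm') μ ∉ pran s ∧ (g : Perm') μ ≠ ν ∧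
    (g : Perm') μ ≠ μ ∧ g⁻¹ μ ∉ pdom s ∧ g⁻¹ μ ∉ pran s ∧ g⁻¹ μ ≠ ν ∧ g⁻¹ μ ≠ μ

def PosOk (s : Set (ℕ × ℕ)) (w : Word) (c : ℕ) : Prop :=
  (w.head? = some (Sum.inr true) → c ∈ pran s) ∧
  (w.head? = some (Sum.inr false) → c ∈ pdom s)

def ZInv (s : Set (ℕ × ℕ)) (ν μ : ℕ) (Gs : Set Perm') (w : Word) (a c : ℕ) : Prop :=
  (wordRel s w a c ∧ c ≠ μ ∧ PosOk s w c)
  ∨ (c = μ ∧ w.head? = some (Sum.inr true))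
  ∨ (∃ g ∈ Gs, c = (g : Perm') μ ∧ w.head? = some (Sum.inl g))
  ∨ (a = μ ∧ ∃ u : Word, w = u ++ [Sum.inr false] ∧
      wordRel s u ν c ∧ c ≠ μ ∧ PosOk s u c)

lemma startCond {s : Set (ℕ × ℕ)} {ν μ : ℕ} :
    ∀ (w : Word) (a c : ℕ), wordRel (insert (ν, μ) s) w a c →
      (w.getLast? = some (Sum.inr true) → a ∈ pdom s ∪ {ν}) ∧
      (w.getLast? = some (Sum.inr false) → a ∈ pran s ∪ {μ}) := by
  intro w
  induction w with
  | nil => intro a c _; simp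
  | cons l w ih =>
    intro a c hw
    obtain ⟨c₀, hw₀, hl⟩ := hw
    rcases eq_or_ne w [] with rfl | hwne
    · have ha : a = c₀ := hw₀
      subst ha
      constructor
      · intro hlast
        have : l = Sum.inr true := by simpa using hlast
        subst this
        rcases Set.mem_insert_iff.mp hl with h | h
        · obtain ⟨h1, _⟩ := Prod.mk.injEq .. ▸ h
          exact Or.inr (by simp [h1])
        · exact Or.inl (mem_pdom.mpr ⟨c, h⟩)
      · intro hlast
        have : l = Sum.inr false := by simpa using hlast
        subst this
        rcases Set.mem_insert_iff.mp hl with h | h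
        · obtain ⟨_, h2⟩ := Prod.mk.injEq .. ▸ h
          exact Or.inr (by simp [h2])
        · exact Or.inl (mem_pran.mpr ⟨c, h⟩)
    · obtain ⟨hd, tl, rfl⟩ := List.exists_cons_of_ne_nil hwne
      rw [List.getLast?_cons_cons]
      exact ih a c₀ hw₀
end Dev2
section Dev3
open List

lemma posOk_nil {s : Set (ℕ×ℕ)} {c : ℕ} : PosOk s [] c := by
  constructor <;> intro h <;> simp at h

lemma posOk_inl {s : Set (ℕ×ℕ)} {w : Word} {c : ℕ} {g : Perm'} :
    PosOk s (Sum.inl g :: w) c := by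
  constructor <;> intro h <;> simp at h

lemma posOk_x {s : Set (ℕ×ℕ)} {w : Word} {c : ℕ} (h : c ∈ pran s) :
    PosOk s (Sum.inr true :: w) c := by
  refine ⟨fun _ => h, fun hh => ?_⟩; simp at hh

lemma posOk_xinv {s : Set (ℕ×ℕ)} {w : Word} {c : ℕ} (h : c ∈ pdom s) :
    PosOk s (Sum.inr false :: w) c := by
  refine ⟨fun hh => ?_, fun _ => h⟩; simp at hh

lemma keyInv {s : Set (ℕ × ℕ)} {ν μ : ℕ} {Gs : Set Perm'} (hs : SafeH s ν μ Gs) :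
    ∀ w : Word, (∃ b, w.getLast? = some (Sum.inr b)) → w.Chain' OkAdj →
    (∀ g : Perm', Sum.inl g ∈ w → g ∈ Gs) →
    ∀ a c : ℕ, wordRel (insert (ν, μ) s) w a c → ZInv s ν μ Gs w a c := by
  intro w
  induction w with
  | nil => rintro ⟨b, hb⟩; simp at hb
  | cons l w ih =>
    rintro hlast hchain hmem a c ⟨c₀, hw₀, hl⟩
    unfold ZInv
    rcases eq_or_ne w [] with rfl | hwne
    · -- base case : the word is [l] with l = inr b
      have ha : a = c₀ := hw₀
      subst ha
      obtain ⟨b, hb⟩ := hlast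
      have hlb : l = Sum.inr b := by simpa using hb
      subst hlb
      cases b
      · -- l = x⁻¹ : hl : (c, a) ∈ insert (ν,μ) s
        rcases Set.mem_insert_iff.mp hl with h | h
        · rw [Prod.mk.injEq] at h
          refine Or.inr (Or.inr (Or.inr ⟨h.2, [], rfl, h.1.symm, ?_, posOk_nil⟩))
          rw [h.1]; exact Ne.symm hs.hμν
        · refine Or.inl ⟨⟨a, rfl, h⟩, ?_, posOk_xinv (mem_pdom.mpr ⟨a, h⟩)⟩
          exact fun hcμ => hs.hμd (mem_pdom.mpr ⟨a, hcμ ▸ h⟩)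
      · -- l = x : hl : (a, c) ∈ insert (ν,μ) s
        rcases Set.mem_insert_iff.mp hl with h | h
        · rw [Prod.mk.injEq] at h
          exact Or.inr (Or.inl ⟨h.2, rfl⟩)
        · refine Or.inl ⟨⟨a, rfl, h⟩, ?_, posOk_x (mem_pran.mpr ⟨a, h⟩)⟩
          exact fun hcμ => hs.hμr (mem_pran.mpr ⟨a, hcμ ▸ h⟩)
    · -- step case
      obtain ⟨hd, tl, rfl⟩ := List.exists_cons_of_ne_nil hwne
      rw [List.getLast?_cons_cons] at hlast
      rw [List.Chain', List.isChain_cons] at hchain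
      obtain ⟨hadj0, hchain⟩ := hchain
      have hadj : OkAdj l hd := hadj0 hd rfl
      have hinv := ih hlast hchain (fun g hg => hmem g (List.mem_cons_of_mem _ hg)) a c₀ hw₀
      unfold ZInv at hinv
      rcases hinv with ⟨hA, hAne, hApos⟩ | ⟨rfl, hBhd⟩ | ⟨g, hgGs, rfl, hChd⟩ |
        ⟨haμ, u, huw, hur, hune, hupos⟩
      · -- state A
        cases l with
        | inl g =>
          have hgGs : g ∈ Gs := hmem g List.mem_cons_self
          have hgc : (g : Perm') c₀ = c := hl
          refine Or.inl ⟨⟨c₀, hA, hl⟩, ?_, posOk_inl⟩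
          intro hcμ
          have hc₀ : c₀ = g⁻¹ μ := by rw [← hgc] at hcμ; rw [← hcμ]; simp
          cases hd with
          | inl g' => exact hadj
          | inr b =>
            cases b
            · have hmemd := hApos.2 rfl
              rw [hc₀] at hmemd
              exact (hs.hg g hgGs).2.2.2.2.1 hmemd
            · have hmemr := hApos.1 rfl
              rw [hc₀] at hmemr
              exact (hs.hg g hgGs).2.2.2.2.2.1 hmemr
        | inr b =>
          cases b
          · rcases Set.mem_insert_iff.mp hl with h | h
            · rw [Prod.mk.injEq] at h
              exact absurd h.2 hAne
            · refine Or.inl ⟨⟨c₀, hA, h⟩, ?_, posOk_xinv (mem_pdom.mpr ⟨c₀, h⟩)⟩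
              exact fun hcμ => hs.hμd (mem_pdom.mpr ⟨c₀, hcμ ▸ h⟩)
          · rcases Set.mem_insert_iff.mp hl with h | h
            · rw [Prod.mk.injEq] at h
              exact Or.inr (Or.inl ⟨h.2, rfl⟩)
            · refine Or.inl ⟨⟨c₀, hA, h⟩, ?_, posOk_x (mem_pran.mpr ⟨c₀, h⟩)⟩
              exact fun hcμ => hs.hμr (mem_pran.mpr ⟨c₀, hcμ ▸ h⟩)
      · -- state B
        have hhd : hd = Sum.inr true := by simpa using hBhd
        subst hhd
        cases l with
        | inl g =>
          exact Or.inr (Or.inr (Or.inl ⟨g, hmem g List.mem_cons_self, hl.symm, rfl⟩))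
        | inr b =>
          cases b
          · simp at hadj
          · rcases Set.mem_insert_iff.mp hl with h | h
            · rw [Prod.mk.injEq] at h
              exact absurd h.1 hs.hμν
            · exact absurd (mem_pdom.mpr ⟨c, h⟩) hs.hμd
      · -- state C
        have hhd : hd = Sum.inl g := by simpa using hChd
        subst hhd
        cases l with
        | inl g' => simp at hadj
        | inr b =>
          cases b
          · rcases Set.mem_insert_iff.mp hl with h | h
            · rw [Prod.mk.injEq] at h
              exact absurd h.2 (hs.hg g hgGs).2.2.2.1
            · exact absurd (mem_pran.mpr ⟨c, h⟩) (hs.hg g hgGs).2.1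
          · rcases Set.mem_insert_iff.mp hl with h | h
            · rw [Prod.mk.injEq] at h
              exact absurd h.1 (hs.hg g hgGs).2.2.1
            · exact absurd (mem_pdom.mpr ⟨c, h⟩) (hs.hg g hgGs).1
      · -- state D
        cases l with
        | inl g =>
          have hgGs : g ∈ Gs := hmem g List.mem_cons_self
          have hgc : (g : Perm') c₀ = c := hl
          refine Or.inr (Or.inr (Or.inr ⟨haμ, Sum.inl g :: u,
            by rw [List.cons_append, huw], ⟨c₀, hur, hl⟩, ?_, posOk_inl⟩))
          intro hcμ
          have hc₀ : c₀ = g⁻¹ μ := by rw [← hgc] at hcμ; rw [← hcμ]; simp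
          rcases eq_or_ne u [] with rfl | hune'
          · have hν : ν = c₀ := hur
            exact (hs.hg g hgGs).2.2.2.2.2.2.1 (by rw [← hc₀, ← hν])
          · obtain ⟨hu, tu, rfl⟩ := List.exists_cons_of_ne_nil hune'
            have hhd : hd = hu := by
              rw [List.cons_append] at huw
              exact (List.cons_eq_cons.mp huw).1
            cases hu with
            | inl g' => rw [hhd] at hadj; exact hadj
            | inr b =>
              cases b
              · have hmemd := hupos.2 rfl
                rw [hc₀] at hmemd
                exact (hs.hg g hgGs).2.2.2.2.1 hmemd
              · have hmemr := hupos.1 rfl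
                rw [hc₀] at hmemr
                exact (hs.hg g hgGs).2.2.2.2.2.1 hmemr
        | inr b =>
          cases b
          · rcases Set.mem_insert_iff.mp hl with h | h
            · rw [Prod.mk.injEq] at h
              exact absurd h.2 hune
            · refine Or.inr (Or.inr (Or.inr ⟨haμ, Sum.inr false :: u,
                by rw [List.cons_append, huw], ⟨c₀, hur, h⟩, ?_,
                posOk_xinv (mem_pdom.mpr ⟨c₀, h⟩)⟩))
              exact fun hcμ => hs.hμd (mem_pdom.mpr ⟨c₀, hcμ ▸ h⟩)
          · rcases Set.mem_insert_iff.mp hl with h | h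
            · rw [Prod.mk.injEq] at h
              exact Or.inr (Or.inl ⟨h.2, rfl⟩)
            · refine Or.inr (Or.inr (Or.inr ⟨haμ, Sum.inr true :: u,
                by rw [List.cons_append, huw], ⟨c₀, hur, h⟩, ?_,
                posOk_x (mem_pran.mpr ⟨c₀, h⟩)⟩))
              exact fun hcμ => hs.hμr (mem_pran.mpr ⟨c₀, hcμ ▸ h⟩)
end Dev3
section Dev4
open List

lemma fixEq {s : Set (ℕ × ℕ)} {ν μ : ℕ} {Gs : Set Perm'} (hs : SafeH s ν μ Gs)
    {w : Word} (hlast : ∃ b, w.getLast? = some (Sum.inr b))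
    (hchain : w.Chain' OkAdj) (hmem : ∀ g : Perm', Sum.inl g ∈ w → g ∈ Gs)
    (hnb : ¬(w.getLast? = some (Sum.inr false) ∧ w.head? = some (Sum.inr true))) :
    wordFix (insert (ν, μ) s) w = wordFix s w := by
  apply Set.Subset.antisymm
  · intro a ha
    have hinv := keyInv hs w hlast hchain hmem a a ha
    have hstart := startCond (s := s) (ν := ν) (μ := μ) w a a ha
    simp only [Set.mem_union, Set.mem_singleton_iff] at hstart
    unfold ZInv at hinv
    obtain ⟨b, hb⟩ := hlast
    rcases hinv with ⟨h1, _, _⟩ | ⟨haμ, hhd⟩ | ⟨g, hgGs, hag, hhd⟩ |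
      ⟨haμ, u, huw, hur, hune, _⟩
    · exact h1
    · cases b
      · exact absurd ⟨hb, hhd⟩ hnb
      · rcases hstart.1 hb with h | h
        · exact absurd (haμ ▸ h) hs.hμd
        · exact absurd (haμ ▸ h) hs.hμν
    · cases b
      · rcases hstart.2 hb with h | h
        · exact absurd (hag ▸ h) (hs.hg g hgGs).2.1
        · exact absurd (hag ▸ h) (hs.hg g hgGs).2.2.2.1
      · rcases hstart.1 hb with h | h
        · exact absurd (hag ▸ h) (hs.hg g hgGs).1
        · exact absurd (hag ▸ h) (hs.hg g hgGs).2.2.1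
    · exact absurd haμ hune
  · exact fun a ha => wordRel_mono (Set.subset_insert _ _) w ha
end Dev4
section Dev5
open List

lemma rep_getLast? {α : Type*} (n : ℕ) (h : n ≠ 0) (x : α) :
    (List.replicate n x).getLast? = some x := by
  cases n with
  | zero => simp at h
  | succ k => induction k with
    | zero => rfl
    | succ j ih => rw [List.replicate_succ, List.replicate_succ, List.getLast?_cons_cons,
        ← List.replicate_succ]; exact ih (by simp)

lemma rep_chain' {α : Type*} (n : ℕ) (R : α → α → Prop) (x : α) (h : R x x) :
    List.Chain' R (List.replicate n x) := by
  induction n with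
  | zero => exact List.isChain_nil
  | succ k ih => rw [List.replicate_succ, List.Chain', List.isChain_cons]
                 refine ⟨fun b hb => ?_, ih⟩
                 cases k with
                 | zero => simp at hb
                 | succ j => simp [List.replicate_succ] at hb; simp [← hb, h]

lemma getLast?_cons_ne {α : Type*} (x : α) {l : List α} (h : l ≠ []) :
    (x :: l).getLast? = l.getLast? := by
  obtain ⟨y, t, rfl⟩ := List.exists_cons_of_ne_nil h
  exact List.getLast?_cons_cons ..

lemma rep_head? {α : Type*} {n : ℕ} (h : n ≠ 0) (x : α) :
    (List.replicate n x).head? = some x := by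
  cases n with
  | zero => simp at h
  | succ k => rfl

lemma xpow_eq (k : ℤ) :
    xpow k = List.replicate k.natAbs (Sum.inr (decide (0 ≤ k)) : Letter) := by
  unfold xpow
  split_ifs with h
  · have h1 : k.toNat = k.natAbs := by omega
    have h2 : decide (0 ≤ k) = true := decide_eq_true h
    rw [h1, h2]
  · have h1 : (-k).toNat = k.natAbs := by omega
    have h2 : decide (0 ≤ k) = false := decide_eq_false h
    rw [h1, h2]

lemma xpow_ne_nil {k : ℤ} (h : k ≠ 0) : xpow k ≠ [] := by
  rw [xpow_eq]
  have : k.natAbs ≠ 0 := by omega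
  simp [this]

lemma blockWord_chain' (p : Perm' × ℤ) : (blockWord p).Chain' OkAdj := by
  unfold blockWord
  rw [List.Chain', List.isChain_cons]
  refine ⟨fun y hy => ?_, ?_⟩
  · rw [xpow_eq] at hy
    rcases Nat.eq_zero_or_pos p.2.natAbs with h0 | h0
    · simp [h0] at hy
    · rw [rep_head? (by omega)] at hy
      cases hy
      exact okAdj_inl_inr
  · rw [xpow_eq]
    exact rep_chain' _ _ _ rfl

lemma blockWord_getLast {p : Perm' × ℤ} (h : p.2 ≠ 0) :
    (blockWord p).getLast? = some (Sum.inr (decide (0 ≤ p.2))) := by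
  unfold blockWord
  rw [getLast?_cons_ne _ (xpow_ne_nil h), xpow_eq]
  exact rep_getLast? _ (by omega) _

lemma blocks_struct : ∀ (bs : List (Perm' × ℤ)), bs ≠ [] → (∀ p ∈ bs, p.2 ≠ 0) →
    ((bs.map blockWord).flatten ≠ []) ∧
    ((bs.map blockWord).flatten.Chain' OkAdj) ∧
    (∀ g : Perm', Sum.inl g ∈ (bs.map blockWord).flatten → ∃ p ∈ bs, p.1 = g) ∧
    (∃ g : Perm', (bs.map blockWord).flatten.head? = some (Sum.inl g)) ∧
    (∀ p, bs.getLast? = some p →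
      (bs.map blockWord).flatten.getLast? = some (Sum.inr (decide (0 ≤ p.2)))) := by
  intro bs
  induction bs with
  | nil => intro h; exact absurd rfl h
  | cons p bs ih =>
    intro _ hk
    have hpk : p.2 ≠ 0 := hk p List.mem_cons_self
    have hflat : ((p :: bs).map blockWord).flatten
        = blockWord p ++ (bs.map blockWord).flatten := by simp
    have hmemblock : ∀ g : Perm', Sum.inl g ∈ blockWord p → g = p.1 := by
      intro g hg
      unfold blockWord at hg
      rcases List.mem_cons.mp hg with h | h
      · cases h; rfl
      · rw [xpow_eq] at h
        have := List.eq_of_mem_replicate h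
        simp at this
    rcases eq_or_ne bs [] with rfl | hbs
    · have hflat' : ((p :: ([] : List (Perm' × ℤ))).map blockWord).flatten = blockWord p := by
        simp
      rw [hflat']
      refine ⟨by unfold blockWord; simp, blockWord_chain' p, ?_, ⟨p.1, rfl⟩, ?_⟩
      · intro g hg; exact ⟨p, List.mem_cons_self, (hmemblock g hg).symm⟩
      · intro q hq
        have hqp : p = q := by simpa using hq
        subst hqp
        exact blockWord_getLast hpk
    · obtain ⟨ihne, ihch, ihmem, ⟨g0, ihhd⟩, ihlast⟩ :=
        ih hbs (fun q hq => hk q (List.mem_cons_of_mem _ hq))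
      rw [hflat]
      refine ⟨?_, ?_, ?_, ?_, ?_⟩
      · simp [blockWord]
      · rw [List.Chain', List.isChain_append]
        refine ⟨blockWord_chain' p, ihch, ?_⟩
        intro x hx y hy
        rw [blockWord_getLast hpk] at hx
        rw [ihhd] at hy
        cases hx; cases hy
        exact okAdj_inr_inl
      · intro g hg
        rcases List.mem_append.mp hg with h | h
        · exact ⟨p, List.mem_cons_self, (hmemblock g h).symm⟩
        · obtain ⟨q, hq, hq'⟩ := ihmem g h
          exact ⟨q, List.mem_cons_of_mem _ hq, hq'⟩
      · refine ⟨p.1, ?_⟩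
        unfold blockWord
        rw [List.cons_append]
        rfl
      · intro q hq
        rw [getLast?_cons_ne _ hbs] at hq
        rw [List.getLast?_append_of_ne_nil _ ihne]
        exact ihlast q hq

lemma nice_struct {G : Subgroup Perm'} {w : Word} (h : IsNice G w) :
    w ≠ [] ∧ w.getLast? = some (Sum.inr true) ∧
    w.Chain' OkAdj ∧ (∀ g : Perm', Sum.inl g ∈ w → g ∈ G ∧ g ≠ 1) ∧
    w.head? ≠ some (Sum.inr false) := by
  rcases h with ⟨k, hk, rfl⟩ | ⟨bs, hbs, hmem, ⟨p, hlastp, hppos⟩, rfl⟩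
  · have he : xpow (k : ℤ) = List.replicate k (Sum.inr true : Letter) := by
      rw [xpow_eq]
      have hn : ((k : ℤ)).natAbs = k := by omega
      have hb : (decide ((0:ℤ) ≤ (k : ℤ))) = true := by simp
      rw [hn, hb]
    rw [he]
    have hk' : k ≠ 0 := by omega
    refine ⟨by simp [hk'], rep_getLast? _ hk' _, rep_chain' _ _ _ rfl, ?_, ?_⟩
    · intro g hg
      have := List.eq_of_mem_replicate hg
      simp at this
    · rw [rep_head? hk']
      simp
  · obtain ⟨hne, hch, hmem', ⟨g0, hhd⟩, hlast⟩ :=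
      blocks_struct bs hbs (fun q hq => (hmem q hq).2.2)
    refine ⟨hne, ?_, hch, ?_, ?_⟩
    · have := hlast p hlastp
      rw [this]
      have : decide (0 ≤ p.2) = true := decide_eq_true (le_of_lt hppos)
      rw [this]
    · intro g hg
      obtain ⟨q, hq, rfl⟩ := hmem' g hg
      exact ⟨(hmem q hq).1, (hmem q hq).2.1⟩
    · rw [hhd]; simp
end Dev5
section Dev6
open List

lemma okAdj_flip {a b : Letter} (h : OkAdj a b) : OkAdj (flipL a) (flipL b) := by
  cases a <;> cases b <;> simp_all [flipL]

lemma flipW_ne_nil {w : Word} (h : w ≠ []) : flipW w ≠ [] := by simp [flipW, h]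

lemma flipW_getLast {w : Word} (h : w.getLast? = some (Sum.inr true)) :
    (flipW w).getLast? = some (Sum.inr false) := by
  unfold flipW
  rw [List.getLast?_map, h]
  rfl

lemma flipW_chain' {w : Word} (h : w.Chain' OkAdj) : (flipW w).Chain' OkAdj := by
  unfold flipW
  rw [List.Chain', List.isChain_map]
  exact List.IsChain.imp (fun a b hab => okAdj_flip hab) h

lemma mem_inl_flipW {g : Perm'} {w : Word} : Sum.inl g ∈ flipW w ↔ Sum.inl g ∈ w := by
  unfold flipW
  constructor
  · intro h
    obtain ⟨l, hl, he⟩ := List.mem_map.mp h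
    cases l with
    | inl g' => cases he; exact hl
    | inr b => simp [flipL] at he
  · intro h
    exact List.mem_map.mpr ⟨_, h, rfl⟩

lemma flipW_head {w : Word} (h : w.head? ≠ some (Sum.inr false)) :
    (flipW w).head? ≠ some (Sum.inr true) := by
  unfold flipW
  rw [List.head?_map]
  intro hc
  rw [Option.map_eq_some_iff] at hc
  obtain ⟨l, hl, he⟩ := hc
  cases l with
  | inl g => simp [flipL] at he
  | inr b =>
    cases b
    · exact h hl
    · simp [flipL] at he

lemma mem_relOrbit_self (R : ℕ → ℕ → Prop) (n : ℕ) : n ∈ relOrbit R n :=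
  Set.mem_sInter.mpr (fun _ hO => hO.1)

lemma relClosed_relOrbit (R : ℕ → ℕ → Prop) (n : ℕ) : RelClosed R (relOrbit R n) := by
  intro a b hab
  simp only [relOrbit, Set.mem_sInter]
  constructor
  · intro h O hO; exact (hO.2 a b hab).mp (h O hO)
  · intro h O hO; exact (hO.2 a b hab).mpr (h O hO)

lemma relOrbit_subset {R : ℕ → ℕ → Prop} {n : ℕ} {O : Set ℕ} (hn : n ∈ O)
    (hO : RelClosed R O) : relOrbit R n ⊆ O :=
  Set.sInter_subset_of_mem ⟨hn, hO⟩

lemma relDom_sRel (s : Set (ℕ × ℕ)) : relDom (sRel s) = pdom s := by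
  ext a; simp [relDom, sRel, mem_pdom]

lemma relRan_sRel (s : Set (ℕ × ℕ)) : relRan (sRel s) = pran s := by
  ext a; simp [relRan, sRel, mem_pran]

lemma closedOrbits_insert {s : Set (ℕ × ℕ)} {ν μ : ℕ}
    (hν : ν ∉ pdom s) (hμ : μ ∉ pran s) (hμν : μ ≠ ν)
    (hside : μ ∉ pdom s ∨ ν ∉ pran s) :
    relClosedOrbits (sRel (insert (ν, μ) s)) = relClosedOrbits (sRel s) := by
  set t := insert (ν, μ) s with ht
  have hsub : s ⊆ t := Set.subset_insert _ _
  have hrel : sRel t ν μ := Set.mem_insert _ _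
  have hclosed_mono : ∀ O : Set ℕ, RelClosed (sRel t) O → RelClosed (sRel s) O :=
    fun O hO a b hab => hO a b (hsub hab)
  have hclosed_up : ∀ O : Set ℕ, RelClosed (sRel s) O → ν ∉ O → μ ∉ O →
      RelClosed (sRel t) O := by
    intro O hO hν' hμ' a b hab
    rcases Set.mem_insert_iff.mp hab with h | h
    · rw [Prod.mk.injEq] at h
      rw [h.1, h.2]
      constructor
      · intro hx; exact absurd hx hν'
      · intro hx; exact absurd hx hμ'
    · exact hO a b h
  have hdomt : relDom (sRel t) = pdom s ∪ {ν} := by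
    ext a
    simp only [relDom, sRel, ht, Set.mem_insert_iff, Set.mem_setOf_eq, mem_pdom,
      Set.mem_union, Set.mem_singleton_iff, Prod.mk.injEq]
    constructor
    · rintro ⟨b, hb | hb⟩
      · exact Or.inr hb.1
      · exact Or.inl ⟨b, hb⟩
    · rintro (⟨b, hb⟩ | rfl)
      · exact ⟨b, Or.inr hb⟩
      · exact ⟨μ, Or.inl ⟨rfl, rfl⟩⟩
  have hrant : relRan (sRel t) = pran s ∪ {μ} := by
    ext a
    simp only [relRan, sRel, ht, Set.mem_insert_iff, Set.mem_setOf_eq, mem_pran,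
      Set.mem_union, Set.mem_singleton_iff, Prod.mk.injEq]
    constructor
    · rintro ⟨b, hb | hb⟩
      · exact Or.inr hb.2
      · exact Or.inl ⟨b, hb⟩
    · rintro (⟨b, hb⟩ | rfl)
      · exact ⟨b, Or.inr hb⟩
      · exact ⟨ν, Or.inl ⟨rfl, rfl⟩⟩
  ext O
  simp only [relClosedOrbits, relOrbits, Set.mem_setOf_eq, Set.mem_sep_iff]
  constructor
  · rintro ⟨⟨a, rfl⟩, hsubO⟩
    have hνO : ν ∉ relOrbit (sRel t) a := by
      intro hνin
      have hμin : μ ∈ relOrbit (sRel t) a :=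
        (relClosed_relOrbit (sRel t) a ν μ hrel).mp hνin
      have h1 := hsubO hμin
      have h2 := hsubO hνin
      rw [Set.mem_inter_iff, hdomt, hrant] at h1 h2
      rcases hside with hs1 | hs2
      · rcases h1.1 with h | h
        · exact hs1 h
        · exact hμν h
      · rcases h2.2 with h | h
        · exact hs2 h
        · exact hμν h.symm
    have hμO : μ ∉ relOrbit (sRel t) a :=
      fun hμin => hνO ((relClosed_relOrbit (sRel t) a ν μ hrel).mpr hμin)
    have hOs : RelClosed (sRel s) (relOrbit (sRel t) a) :=
      hclosed_mono _ (relClosed_relOrbit _ _)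
    have hst : relOrbit (sRel s) a ⊆ relOrbit (sRel t) a :=
      relOrbit_subset (mem_relOrbit_self _ _) hOs
    have heq : relOrbit (sRel s) a = relOrbit (sRel t) a := by
      apply Set.Subset.antisymm hst
      apply relOrbit_subset (mem_relOrbit_self (sRel s) a)
      exact hclosed_up _ (relClosed_relOrbit _ _) (fun h => hνO (hst h)) (fun h => hμO (hst h))
    refine ⟨⟨a, heq.symm⟩, ?_⟩
    intro x hx
    have h1 := hsubO hx
    rw [Set.mem_inter_iff, hdomt, hrant] at h1
    rw [Set.mem_inter_iff, relDom_sRel, relRan_sRel]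
    constructor
    · rcases h1.1 with h | h
      · exact h
      · exact absurd (h ▸ hx) hνO
    · rcases h1.2 with h | h
      · exact h
      · exact absurd (h ▸ hx) hμO
  · rintro ⟨⟨a, rfl⟩, hsubO⟩
    have hνO : ν ∉ relOrbit (sRel s) a := by
      intro h
      have := (hsubO h).1
      rw [relDom_sRel] at this
      exact hν this
    have hμO : μ ∉ relOrbit (sRel s) a := by
      intro h
      have := (hsubO h).2
      rw [relRan_sRel] at this
      exact hμ this
    have htcl : RelClosed (sRel t) (relOrbit (sRel s) a) :=
      hclosed_up _ (relClosed_relOrbit _ _) hνO hμO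
    have heq : relOrbit (sRel t) a = relOrbit (sRel s) a :=
      Set.Subset.antisymm (relOrbit_subset (mem_relOrbit_self _ _) htcl)
        (relOrbit_subset (mem_relOrbit_self _ _) (hclosed_mono _ (relClosed_relOrbit _ _)))
    refine ⟨⟨a, heq.symm⟩, ?_⟩
    intro x hx
    have h1 := hsubO hx
    rw [Set.mem_inter_iff, relDom_sRel, relRan_sRel] at h1
    rw [Set.mem_inter_iff, hdomt, hrant]
    exact ⟨Or.inl h1.1, Or.inl h1.2⟩

lemma niceInj_transfer {s t : Set (ℕ × ℕ)}
    (h : relClosedOrbits (sRel t) = relClosedOrbits (sRel s)) :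
    NiceInj t ↔ NiceInj s := by
  unfold NiceInj; rw [h]

lemma codesReal_transfer {s t : Set (ℕ × ℕ)} {r : ℕ → Fin 2}
    (h : relClosedOrbits (sRel t) = relClosedOrbits (sRel s)) :
    CodesReal t r ↔ CodesReal s r := by
  unfold CodesReal orbitIndex; rw [h]
end Dev6
section Dev7
open List

def badSet (s : Set (ℕ × ℕ)) (Gs : Set Perm') (z : ℕ) : Set ℕ :=
  (pdom s ∪ pran s ∪ {z}) ∪
    ⋃ g ∈ Gs, ((⇑(g : Perm') ⁻¹' (pdom s ∪ pran s ∪ {z})) ∪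
      (⇑(g⁻¹ : Perm') ⁻¹' (pdom s ∪ pran s ∪ {z})) ∪ {k : ℕ | (g : Perm') k = k})

lemma badSet_finite {G : Subgroup Perm'} (hG : Cofinitary G) {s : Set (ℕ × ℕ)}
    {Gs : Set Perm'} (hsfin : s.Finite) (hGsfin : Gs.Finite)
    (hGsub : ∀ g ∈ Gs, g ∈ G ∧ g ≠ 1) (z : ℕ) : (badSet s Gs z).Finite := by
  have hC : (pdom s ∪ pran s ∪ ({z} : Set ℕ)).Finite :=
    ((hsfin.image _).union (hsfin.image _)).union (Set.finite_singleton z)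
  refine hC.union (Set.Finite.biUnion hGsfin ?_)
  intro g hg
  refine Set.Finite.union (Set.Finite.union ?_ ?_) ?_
  · exact hC.preimage (Set.injOn_of_injective (Equiv.injective _))
  · exact hC.preimage (Set.injOn_of_injective (Equiv.injective _))
  · exact hG g (hGsub g hg).1 (hGsub g hg).2

lemma badFacts {s : Set (ℕ × ℕ)} {Gs : Set Perm'} {z y : ℕ}
    (h : y ∉ badSet s Gs z) :
    y ∉ pdom s ∧ y ∉ pran s ∧ y ≠ z ∧
    ∀ g ∈ Gs, (g : Perm') y ∉ pdom s ∧ (g : Perm') y ∉ pran s ∧ (g : Perm') y ≠ z ∧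
      (g : Perm') y ≠ y ∧ g⁻¹ y ∉ pdom s ∧ g⁻¹ y ∉ pran s ∧ g⁻¹ y ≠ z ∧ g⁻¹ y ≠ y := by
  have hC : y ∉ pdom s ∪ pran s ∪ ({z} : Set ℕ) :=
    fun hx => h (Set.mem_union_left _ hx)
  have hU : ∀ g ∈ Gs, y ∉ ((⇑(g : Perm') ⁻¹' (pdom s ∪ pran s ∪ {z})) ∪
      (⇑(g⁻¹ : Perm') ⁻¹' (pdom s ∪ pran s ∪ {z})) ∪ {k : ℕ | (g : Perm') k = k}) :=
    fun g hg hx => h (Set.mem_union_right _ (Set.mem_biUnion hg hx))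
  have hCd : y ∉ pdom s := fun hx => hC (Set.mem_union_left _ (Set.mem_union_left _ hx))
  have hCr : y ∉ pran s := fun hx => hC (Set.mem_union_left _ (Set.mem_union_right _ hx))
  have hCz : y ≠ z := fun hx => hC (Set.mem_union_right _ (by simp [hx]))
  refine ⟨hCd, hCr, hCz, ?_⟩
  intro g hg
  have h1 : (g : Perm') y ∉ pdom s ∪ pran s ∪ ({z} : Set ℕ) :=
    fun hx => hU g hg (Set.mem_union_left _ (Set.mem_union_left _ hx))
  have h2 : (g⁻¹ : Perm') y ∉ pdom s ∪ pran s ∪ ({z} : Set ℕ) :=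
    fun hx => hU g hg (Set.mem_union_left _ (Set.mem_union_right _ hx))
  have h3 : (g : Perm') y ≠ y := fun hx => hU g hg (Set.mem_union_right _ hx)
  have h4 : (g⁻¹ : Perm') y ≠ y := by
    intro hx
    apply h3
    have := congrArg (g : Perm') hx
    rw [show (g : Perm') (g⁻¹ y) = y from g.apply_symm_apply y] at this
    rw [← this]
  refine ⟨fun hx => h1 (Set.mem_union_left _ (Set.mem_union_left _ hx)),
    fun hx => h1 (Set.mem_union_left _ (Set.mem_union_right _ hx)),
    fun hx => h1 (Set.mem_union_right _ (by simp [hx])),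
    h3,
    fun hx => h2 (Set.mem_union_left _ (Set.mem_union_left _ hx)),
    fun hx => h2 (Set.mem_union_left _ (Set.mem_union_right _ hx)),
    fun hx => h2 (Set.mem_union_right _ (by simp [hx])),
    h4⟩

lemma extCond {G : Subgroup Perm'} {r : ℕ → Fin 2} {s : Set (ℕ × ℕ)} {E : Set Word}
    (hc : ZrCond G r s E) {n m : ℕ}
    (hn : n ∉ pdom s) (hm : m ∉ pran s) (hmn : m ≠ n)
    (hside : m ∉ pdom s ∨ n ∉ pran s)
    (hfix : ∀ w ∈ E, wordFix (insert (n, m) s) w = wordFix s w) :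
    ZrCond G r (insert (n, m) s) E ∧ ZLe (insert (n, m) s) E s E := by
  obtain ⟨⟨hsfin, hsinj, hEfin, hEnice⟩, hni, hcode⟩ := hc
  have horb := closedOrbits_insert hn hm hmn hside
  refine ⟨⟨⟨hsfin.insert _, ⟨?_, ?_⟩, hEfin, hEnice⟩,
    (niceInj_transfer horb).mpr hni, (codesReal_transfer horb).mpr hcode⟩,
    Set.subset_insert _ _, subset_rfl, hfix⟩
  · rintro a b c hab hac
    rcases Set.mem_insert_iff.mp hab with h1 | h1 <;>
      rcases Set.mem_insert_iff.mp hac with h2 | h2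
    · rw [Prod.mk.injEq] at h1 h2; rw [h1.2, h2.2]
    · rw [Prod.mk.injEq] at h1
      exact absurd (mem_pdom.mpr ⟨c, by rw [← h1.1]; exact h2⟩) hn
    · rw [Prod.mk.injEq] at h2
      exact absurd (mem_pdom.mpr ⟨b, by rw [← h2.1]; exact h1⟩) hn
    · exact hsinj.1 h1 h2
  · rintro a b c hac hbc
    rcases Set.mem_insert_iff.mp hac with h1 | h1 <;>
      rcases Set.mem_insert_iff.mp hbc with h2 | h2
    · rw [Prod.mk.injEq] at h1 h2; rw [h1.1, h2.1]
    · rw [Prod.mk.injEq] at h1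
      exact absurd (mem_pran.mpr ⟨b, by rw [← h1.2]; exact h2⟩) hm
    · rw [Prod.mk.injEq] at h2
      exact absurd (mem_pran.mpr ⟨a, by rw [← h2.2]; exact h1⟩) hm
    · exact hsinj.2 h1 h2
end Dev7
/-- Domain and range extension for the coding forcing `Z_G(r)`. -/
theorem statement5 (G : Subgroup Perm') (hG : Cofinitary G) (r : ℕ → Fin 2)
    (s : Set (ℕ × ℕ)) (E : Set Word) (hc : ZrCond G r s E) :
    (∀ n : ℕ, n ∉ pdom s →
      {m : ℕ | ¬ (ZrCond G r (insert (n, m) s) E ∧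
        ZLe (insert (n, m) s) E s E)}.Finite) ∧
    (∀ m : ℕ, m ∉ pran s →
      {n : ℕ | ¬ (ZrCond G r (insert (n, m) s) E ∧
        ZLe (insert (n, m) s) E s E)}.Finite) := by
  classical
  obtain ⟨⟨hsfin, hsinj, hEfin, hEnice⟩, hni, hcode⟩ := hc
  have hcfull : ZrCond G r s E := ⟨⟨hsfin, hsinj, hEfin, hEnice⟩, hni, hcode⟩
  set Gs : Set Perm' := {g : Perm' | ∃ w ∈ E, Sum.inl g ∈ w} with hGsdef
  have hGsub : ∀ g ∈ Gs, g ∈ G ∧ g ≠ 1 := by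
    rintro g ⟨w, hw, hgw⟩
    exact (nice_struct (hEnice w hw)).2.2.2.1 g hgw
  have hGsfin : Gs.Finite := by
    have hsubU : Gs ⊆ ⋃ w ∈ E, {g : Perm' | Sum.inl g ∈ w} := by
      rintro g ⟨w, hw, hgw⟩; exact Set.mem_biUnion hw hgw
    refine Set.Finite.subset (Set.Finite.biUnion hEfin ?_) hsubU
    intro w _
    have hsub2 : {g : Perm' | Sum.inl g ∈ w} ⊆ Sum.inl ⁻¹' {l : Letter | l ∈ w} :=
      fun g hg => hg
    exact Set.Finite.subset
      ((w.finite_toSet).preimage (Set.injOn_of_injective Sum.inl_injective)) hsub2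
  have hmemGs : ∀ w ∈ E, ∀ g : Perm', Sum.inl g ∈ w → g ∈ Gs :=
    fun w hw g hg => ⟨w, hw, hg⟩
  constructor
  · -- domain extension
    intro n hn
    apply Set.Finite.subset (badSet_finite hG hsfin hGsfin hGsub n)
    intro m hm
    by_contra hmB
    apply hm
    obtain ⟨hmd, hmr, hmn, hgfacts⟩ := badFacts hmB
    have hsafe : SafeH s n m Gs := ⟨hn, hmd, hmr, hmn, hgfacts⟩
    refine extCond hcfull hn hmr hmn (Or.inl hmd) ?_
    intro w hw
    obtain ⟨hne, hlast, hch, _, hhd⟩ := nice_struct (hEnice w hw)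
    refine fixEq hsafe ⟨true, hlast⟩ hch (hmemGs w hw) ?_
    rintro ⟨h1, _⟩
    rw [hlast] at h1
    simp at h1
  · -- range extension
    intro m hm
    apply Set.Finite.subset (badSet_finite hG hsfin hGsfin hGsub m)
    intro n hn
    by_contra hnB
    apply hn
    obtain ⟨hnd, hnr, hnm, hgfacts⟩ := badFacts hnB
    have hsafe : SafeH (swapS s) m n Gs := by
      refine ⟨?_, ?_, ?_, hnm, ?_⟩
      · rw [pdom_swapS]; exact hm
      · rw [pdom_swapS]; exact hnr
      · rw [pran_swapS]; exact hnd
      · intro g hg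
        obtain ⟨a1, a2, a3, a4, a5, a6, a7, a8⟩ := hgfacts g hg
        rw [pdom_swapS, pran_swapS]
        exact ⟨a2, a1, a3, a4, a6, a5, a7, a8⟩
    refine extCond hcfull hnd hm (Ne.symm hnm) (Or.inr hnr) ?_
    intro w hw
    obtain ⟨hne, hlast, hch, _, hhd⟩ := nice_struct (hEnice w hw)
    have key : wordFix (insert (m, n) (swapS s)) (flipW w) = wordFix (swapS s) (flipW w) := by
      refine fixEq hsafe ⟨false, flipW_getLast hlast⟩ (flipW_chain' hch) ?_ ?_
      · intro g hg; exact hmemGs w hw g (mem_inl_flipW.mp hg)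
      · rintro ⟨_, h2⟩
        exact flipW_head hhd h2
    have h1 : swapS (insert (n, m) s) = insert (m, n) (swapS s) := swapS_insert n m s
    calc wordFix (insert (n, m) s) w
        = wordFix (swapS (insert (n, m) s)) (flipW w) := (wordFix_swap_flip _ w).symm
      _ = wordFix (insert (m, n) (swapS s)) (flipW w) := by rw [h1]
      _ = wordFix (swapS s) (flipW w) := key
      _ = wordFix s w := wordFix_swap_flip s w

end
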